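/- arXiv:2002.00409 — 4 statements merged into one kernel-verified Lean document; each statement's English description precedes it below -/
import Mathlib

section
/- Every compact Hausdorff space K which is Fréchet–Urysohn and has a dense set of isolated points is homeomorphic to the Higson compactification of some finitary coarse space. -/
open Set Filter Topology

universe u u₁ u₂ v w

section CoarsePreamble

variable {X : Type u}

/-- An entourage on `X` is a subset of `X × X` containing the diagonal. -/
def IsEntourage (E : Set (X × X)) : Prop := ∀ x : X, (x, x) ∈ E

/-- Composition `E ∘ F` of two entourages. -/
def entComp (E F : Set (X × X)) : Set (X × X) :=
  {p | ∃ y : X, (p.1, y) ∈ E ∧ (y, p.2) ∈ F}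

/-- Inverse `E⁻¹` of an entourage. -/
def entInv (E : Set (X × X)) : Set (X × X) := {p | (p.2, p.1) ∈ E}

/-- The `E`-ball `E[x]` centered at `x`. -/
def entBall (E : Set (X × X)) (x : X) : Set X := {y | (x, y) ∈ E}

/-- A coarse structure on `X`: a family of entourages covering `X × X`, closed under
`E ∘ F⁻¹` up to enlargement, and downward closed among entourages. -/
structure IsCoarseStructure (𝓔 : Set (Set (X × X))) : Prop where
  ent : ∀ E ∈ 𝓔, IsEntourage E
  cover : ∀ p : X × X, ∃ E ∈ 𝓔, p ∈ E
  comp_subset : ∀ E ∈ 𝓔, ∀ F ∈ 𝓔, ∃ G ∈ 𝓔, entComp E (entInv F) ⊆ G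
  downward : ∀ E F : Set (X × X), IsEntourage E → E ⊆ F → F ∈ 𝓔 → E ∈ 𝓔

/-- A set `B` is bounded in the coarse space `(X, 𝓔)` if `B ⊆ E[x]` for some `E ∈ 𝓔`, `x ∈ X`. -/
def IsBoundedSet (𝓔 : Set (Set (X × X))) (B : Set X) : Prop :=
  ∃ E ∈ 𝓔, ∃ x : X, B ⊆ entBall E x

/-- A coarse structure is finitary if the cardinalities of balls of each entourage
are uniformly finite. -/
def IsFinitaryCoarse (𝓔 : Set (Set (X × X))) : Prop :=
  ∀ E ∈ 𝓔, ∃ n : ℕ, ∀ x : X, (entBall E x).Finite ∧ (entBall E x).ncard ≤ n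

/-- `d : X → X → ℝ` is a metric. -/
structure IsMetricOn (d : X → X → ℝ) : Prop where
  refl : ∀ x, d x x = 0
  eq_of : ∀ x y, d x y = 0 → x = y
  symm : ∀ x y, d x y = d y x
  triangle : ∀ x y z, d x z ≤ d x y + d y z

/-- A coarse structure is metrizable if it is the coarse structure of some metric on `X`,
i.e. consists of all entourages of uniformly bounded `d`-diameter. -/
def IsMetrizableCoarse (𝓔 : Set (Set (X × X))) : Prop :=
  ∃ d : X → X → ℝ, IsMetricOn d ∧
    𝓔 = {E | IsEntourage E ∧ ∃ n : ℕ, ∀ p ∈ E, d p.1 p.2 ≤ (n : ℝ)}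

/-- A cellular entourage: a symmetric and transitive entourage (an equivalence relation). -/
def IsCellularEnt (E : Set (X × X)) : Prop :=
  (∀ p : X × X, p ∈ E → (p.2, p.1) ∈ E) ∧
    ∀ x y z : X, (x, y) ∈ E → (y, z) ∈ E → (x, z) ∈ E

/-- `𝓑` is a base of the coarse structure `𝓔`. -/
def IsCoarseBase (𝓔 𝓑 : Set (Set (X × X))) : Prop :=
  𝓑 ⊆ 𝓔 ∧ ∀ E ∈ 𝓔, ∃ B ∈ 𝓑, E ⊆ B

/-- A coarse structure is cellular if it has a base of cellular entourages. -/
def IsCellularCoarse (𝓔 : Set (Set (X × X))) : Prop :=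
  ∃ 𝓑 : Set (Set (X × X)), IsCoarseBase 𝓔 𝓑 ∧ ∀ B ∈ 𝓑, IsCellularEnt B

/-- A subset `D` is `𝓔`-discrete (thin). -/
def IsCoarseDiscrete (𝓔 : Set (Set (X × X))) (D : Set X) : Prop :=
  ∀ E ∈ 𝓔, ∃ B : Set X, IsBoundedSet 𝓔 B ∧ ∀ x ∈ D \ B, D ∩ entBall E x = {x}

/-- The basic entourage `E_F` determined by a set `F` of permutations of `X`. -/
def permEnt (F : Set (Equiv.Perm X)) : Set (X × X) :=
  {p | p.2 = p.1 ∨ ∃ g ∈ F, p.2 = g p.1}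

/-- The coarse structure `𝓔_G` generated by a set (group) `S` of permutations of `X`:
all entourages contained in `E_F` for some finite `F ⊆ S`. -/
def permCoarse (S : Set (Equiv.Perm X)) : Set (Set (X × X)) :=
  {E | IsEntourage E ∧ ∃ F : Finset (Equiv.Perm X),
    (F : Set (Equiv.Perm X)) ⊆ S ∧ E ⊆ permEnt (F : Set (Equiv.Perm X))}

variable {M : Type v} [MetricSpace M]

/-- A function `φ : X → M` is slowly oscillating. -/
def SlowlyOscillating (𝓔 : Set (Set (X × X))) (φ : X → M) : Prop :=
  ∀ ε : ℝ, 0 < ε → ∀ E ∈ 𝓔, ∃ B : Set X, IsBoundedSet 𝓔 B ∧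
    ∀ x : X, x ∉ B → EMetric.diam (φ '' entBall E x) < ENNReal.ofReal ε

/-- Two sets are asymptotically separated if `E[A] ∩ E[B]` is bounded for every `E ∈ 𝓔`. -/
def AsymptoticallySeparated (𝓔 : Set (Set (X × X))) (A B : Set X) : Prop :=
  ∀ E ∈ 𝓔, IsBoundedSet 𝓔 ((⋃ a ∈ A, entBall E a) ∩ ⋃ b ∈ B, entBall E b)

/-- A coarse space `(X, 𝓔)` is `M`-normal. -/
def IsCoarseNormal (𝓔 : Set (Set (X × X))) (M : Type v) [MetricSpace M] : Prop :=
  ∀ A B : Set X, A.Nonempty → B.Nonempty → Disjoint A B →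
    AsymptoticallySeparated 𝓔 A B →
    ∃ φ : X → M, SlowlyOscillating 𝓔 φ ∧
      ∃ ε : ℝ, 0 < ε ∧ ∀ a ∈ A, ∀ b ∈ B, ε ≤ dist (φ a) (φ b)

/-- `so(X,𝓔;M)`: the bounded slowly oscillating functions `X → M`. -/
def soSet (𝓔 : Set (Set (X × X))) (M : Type v) [MetricSpace M] : Set (X → M) :=
  {φ | Bornology.IsBounded (Set.range φ) ∧ SlowlyOscillating 𝓔 φ}

/-- The canonical map `δ_M : X → M^{so(X,𝓔;M)}`. -/
def deltaMap (𝓔 : Set (Set (X × X))) (M : Type v) [MetricSpace M] :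
    X → (↥(soSet 𝓔 M) → M) := fun x f => f.1 x

/-- The underlying set of the `M`-compactification: the closure of `δ_M(X)`. -/
def hCompSet (𝓔 : Set (Set (X × X))) (M : Type v) [MetricSpace M] :
    Set (↥(soSet 𝓔 M) → M) := closure (Set.range (deltaMap 𝓔 M))

/-- The `M`-compactification `h_M(X,𝓔)` of the coarse space `(X,𝓔)`. -/
abbrev HComp (𝓔 : Set (Set (X × X))) (M : Type v) [MetricSpace M] :=
  ↥(hCompSet 𝓔 M)

/-- The copy of a point `x ∈ X` inside the `M`-compactification. -/
def deltaEmb (𝓔 : Set (Set (X × X))) (M : Type v) [MetricSpace M] (x : X) :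
    HComp 𝓔 M := ⟨deltaMap 𝓔 M x, subset_closure (Set.mem_range_self x)⟩

/-- The permutation group `G_{X, h_M(X,𝓔)}` of the `M`-compactification, as a set of
permutations of `X` (`X` being identified with the set of isolated points of `h_M(X,𝓔)`
via `δ_M`): those permutations induced by homeomorphisms of `h_M(X,𝓔)` fixing all
points outside (the image of) `X`. -/
def hPermGroup (𝓔 : Set (Set (X × X))) (M : Type v) [MetricSpace M] :
    Set (Equiv.Perm X) :=
  {σ | ∃ h : HComp 𝓔 M ≃ₜ HComp 𝓔 M,
    (∀ z : HComp 𝓔 M, z ∉ Set.range (deltaEmb 𝓔 M) → h z = z) ∧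
    ∀ x : X, h (deltaEmb 𝓔 M x) = deltaEmb 𝓔 M (σ x)}

end CoarsePreamble

section TopPreamble

/-- The set of isolated points of a topological space. -/
def isolatedPoints (K : Type w) [TopologicalSpace K] : Set K :=
  {x | IsOpen ({x} : Set K)}

/-- A compactification: a compact Hausdorff space with dense set of isolated points. -/
def IsCompactification (K : Type w) [TopologicalSpace K] : Prop :=
  CompactSpace K ∧ T2Space K ∧ Dense (isolatedPoints K)

/-- The permutation group `G_{K',K}` of a compactification `K`: permutations of the
set `K'` of isolated points induced by homeomorphisms of `K` fixing `K \ K'` pointwise. -/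
def homeoPerms (K : Type w) [TopologicalSpace K] :
    Set (Equiv.Perm ↥(isolatedPoints K)) :=
  {σ | ∃ h : K ≃ₜ K, (∀ z : K, z ∉ isolatedPoints K → h z = z) ∧
    ∀ x : ↥(isolatedPoints K), h x.val = (σ x).val}

/-- The oscillation of `φ : K' → M` at a point `z ∈ K`. -/
noncomputable def oscAt {K : Type w} [TopologicalSpace K] {M : Type v} [MetricSpace M]
    (φ : ↥(isolatedPoints K) → M) (z : K) : ENNReal :=
  ⨅ (O : Set K) (_ : IsOpen O) (_ : z ∈ O),
    EMetric.diam (φ '' (Subtype.val ⁻¹' O))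

/-- A compactification `K` is `M`-soft. -/
def IsMSoft (K : Type w) [TopologicalSpace K] (M : Type v) [MetricSpace M] : Prop :=
  ∀ φ : ↥(isolatedPoints K) → M, Bornology.IsBounded (Set.range φ) →
    (∃ z : K, 0 < oscAt φ z) →
    ∃ σ ∈ homeoPerms K, ∃ ε : ℝ, 0 < ε ∧
      {x : ↥(isolatedPoints K) | ε ≤ dist (φ (σ x)) (φ x)}.Infinite

/-- A compactification `K` is soft. -/
def IsSoft (K : Type w) [TopologicalSpace K] : Prop :=
  ∀ A B : Set ↥(isolatedPoints K), Disjoint A B →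
    (closure (Subtype.val '' A) ∩ closure (Subtype.val '' B)).Nonempty →
    ∃ σ ∈ homeoPerms K, {x : ↥(isolatedPoints K) | x ∈ A ∧ σ x ∈ B}.Infinite

/-- `uc(K',K;M)`: restrictions to the set of isolated points of continuous functions `K → M`. -/
def ucSet (K : Type w) [TopologicalSpace K] (M : Type v) [MetricSpace M] :
    Set (↥(isolatedPoints K) → M) :=
  {φ | ∃ f : K → M, Continuous f ∧ ∀ x : ↥(isolatedPoints K), f x.val = φ x}

/-- `uc(X, h_M(X,𝓔); M)`: restrictions to `X` (via `δ_M`) of continuous functions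
`h_M(X,𝓔) → M`. -/
def ucHComp {X : Type u} (𝓔 : Set (Set (X × X))) (M : Type v) [MetricSpace M] :
    Set (X → M) :=
  {φ | ∃ f : HComp 𝓔 M → M, Continuous f ∧ ∀ x : X, f (deltaEmb 𝓔 M x) = φ x}

/-- The cardinal `Δ`: the smallest cardinality of a base of a cellular finitary coarse
structure on `ω` containing no infinite discrete subsets. -/
noncomputable def smallDeltaCard : Cardinal.{0} :=
  sInf {c : Cardinal.{0} | ∃ 𝓔 : Set (Set (ℕ × ℕ)), IsCoarseStructure 𝓔 ∧
    IsCellularCoarse 𝓔 ∧ IsFinitaryCoarse 𝓔 ∧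
    (∀ D : Set ℕ, IsCoarseDiscrete 𝓔 D → D.Finite) ∧
    ∃ 𝓑 : Set (Set (ℕ × ℕ)), IsCoarseBase 𝓔 𝓑 ∧ Cardinal.mk ↥𝓑 = c}

/-- The cardinal `𝔭`. -/
noncomputable def pCard : Cardinal.{0} :=
  sInf {c : Cardinal.{0} | ∃ F : Set (Set ℕ), (∀ A ∈ F, A.Infinite) ∧
    (∀ S : Finset (Set ℕ), (S : Set (Set ℕ)) ⊆ F → (⋂ A ∈ S, A).Infinite) ∧
    (∀ I : Set ℕ, I.Infinite → ∃ A ∈ F, (I \ A).Infinite) ∧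
    Cardinal.mk ↥F = c}

/-- The character `χ(x;K)` of a point. -/
noncomputable def charAt (K : Type w) [TopologicalSpace K] (x : K) : Cardinal.{w} :=
  sInf {c : Cardinal.{w} | ∃ 𝓑 : Set (Set K), (∀ U ∈ 𝓑, IsOpen U ∧ x ∈ U) ∧
    (∀ V : Set K, IsOpen V → x ∈ V → ∃ U ∈ 𝓑, U ⊆ V) ∧ Cardinal.mk ↥𝓑 = c}

/-- The character `χ(K)` of a space. -/
noncomputable def spaceChar (K : Type w) [TopologicalSpace K] : Cardinal.{w} :=
  ⨆ x : K, charAt K x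

/-- A corona: a compact Hausdorff space homeomorphic to the remainder of a
compactification of the countable discrete space `ℕ`. -/
def IsCorona (K : Type w) [TopologicalSpace K] : Prop :=
  CompactSpace K ∧ T2Space K ∧
    ∃ (C : Type w) (_ : TopologicalSpace C), IsCompactification C ∧
      (isolatedPoints C).Infinite ∧ (isolatedPoints C).Countable ∧
      Nonempty (K ≃ₜ ↥((isolatedPoints C)ᶜ))

/-- A soft corona. -/
def IsSoftCorona (K : Type w) [TopologicalSpace K] : Prop :=
  CompactSpace K ∧ T2Space K ∧
    ∃ (C : Type w) (_ : TopologicalSpace C), IsCompactification C ∧ IsSoft C ∧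
      (isolatedPoints C).Infinite ∧ (isolatedPoints C).Countable ∧
      Nonempty (K ≃ₜ ↥((isolatedPoints C)ᶜ))

/-- An `M`-soft corona. -/
def IsMSoftCorona (K : Type w) [TopologicalSpace K] (M : Type v) [MetricSpace M] : Prop :=
  CompactSpace K ∧ T2Space K ∧
    ∃ (C : Type w) (_ : TopologicalSpace C), IsCompactification C ∧ IsMSoft C M ∧
      (isolatedPoints C).Infinite ∧ (isolatedPoints C).Countable ∧
      Nonempty (K ≃ₜ ↥((isolatedPoints C)ᶜ))

end TopPreamble


namespace Stmt14Aux

def sball {α : Type*} (E : Set (α × α)) (x : α) : Set α := {y | (x, y) ∈ E ∨ (y, x) ∈ E}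

lemma mem_sball_comm {α : Type*} {E : Set (α × α)} {x y : α} :
    y ∈ sball E x ↔ x ∈ sball E y := or_comm

lemma self_mem_sball {α : Type*} {E : Set (α × α)} (hE : IsEntourage E) (x : α) :
    x ∈ sball E x := Or.inl (hE x)

lemma entBall_subset_sball {α : Type*} (E : Set (α × α)) (x : α) :
    entBall E x ⊆ sball E x := fun _ h => Or.inl h

lemma sball_mono {α : Type*} {E F : Set (α × α)} (h : E ⊆ F) (x : α) :
    sball E x ⊆ sball F x := fun _ hy => hy.imp (@h _) (@h _)

lemma ncard_biUnion_le {α β : Type*} {s : Set α} (hs : s.Finite) {t : α → Set β}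
    (ht : ∀ a, (t a).Finite) {m : ℕ} (hm : ∀ a, (t a).ncard ≤ m) :
    (⋃ a ∈ s, t a).ncard ≤ s.ncard * m := by
  refine Set.Finite.induction_on (motive := fun s _ => (⋃ a ∈ s, t a).ncard ≤ s.ncard * m) s hs (by simp) ?_
  clear hs
  intro a s ha hs ih
  have h1 : (⋃ x ∈ insert a s, t x) = t a ∪ ⋃ x ∈ s, t x := by simp
  rw [h1, Set.ncard_insert_of_notMem ha hs]
  have h2 : (t a ∪ ⋃ x ∈ s, t x).ncard ≤ (t a).ncard + (⋃ x ∈ s, t x).ncard :=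
    Set.ncard_union_le _ _
  have h3 : (t a).ncard + (⋃ x ∈ s, t x).ncard ≤ m + s.ncard * m :=
    Nat.add_le_add (hm a) ih
  have h4 : m + s.ncard * m = (s.ncard + 1) * m := by ring
  omega

variable {K : Type u} [TopologicalSpace K]

/-- The "good" entourages on the set of isolated points of `K`. -/
def Good (K : Type u) [TopologicalSpace K]
    (E : Set (↥(isolatedPoints K) × ↥(isolatedPoints K))) : Prop :=
  IsEntourage E ∧ (∃ n : ℕ, ∀ x, (sball E x).Finite ∧ (sball E x).ncard ≤ n) ∧
  ∀ f : K → ℝ, Continuous f → ∀ ε : ℝ, 0 < ε → ∃ B : Set ↥(isolatedPoints K), B.Finite ∧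
    ∀ x ∉ B, EMetric.diam ((fun y : ↥(isolatedPoints K) => f y.val) '' sball E x)
      < ENNReal.ofReal ε

def Ecal (K : Type u) [TopologicalSpace K] :
    Set (Set (↥(isolatedPoints K) × ↥(isolatedPoints K))) := {E | Good K E}

lemma good_downward {E F : Set (↥(isolatedPoints K) × ↥(isolatedPoints K))}
    (hE : IsEntourage E) (hEF : E ⊆ F) (hF : Good K F) : Good K E := by
  obtain ⟨-, ⟨n, hn⟩, hf⟩ := hF
  refine ⟨hE, ⟨n, fun x => ?_⟩, fun f hf' ε hε => ?_⟩
  · exact ⟨(hn x).1.subset (sball_mono hEF x),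
      le_trans (Set.ncard_le_ncard (sball_mono hEF x) (hn x).1) (hn x).2⟩
  · obtain ⟨B, hBfin, hB⟩ := hf f hf' ε hε
    exact ⟨B, hBfin, fun x hx => lt_of_le_of_lt
      (EMetric.diam_mono (Set.image_mono (sball_mono hEF x))) (hB x hx)⟩

lemma good_finset {S : Set ↥(isolatedPoints K)} (hS : S.Finite) :
    Good K ({p | p.1 = p.2} ∪ S ×ˢ S) := by
  refine ⟨fun x => Or.inl rfl, ⟨S.ncard + 1, fun x => ?_⟩, fun f hf ε hε => ?_⟩
  · have hsub : sball ({p | p.1 = p.2} ∪ S ×ˢ S) x ⊆ insert x S := by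
      rintro y (h | h) <;> rcases h with h | h
      · exact Or.inl h.symm
      · exact Or.inr h.2
      · exact Or.inl h
      · exact Or.inr h.1
    exact ⟨(hS.insert x).subset hsub,
      le_trans (Set.ncard_le_ncard hsub (hS.insert x))
        (le_trans (Set.ncard_insert_le _ _) (by omega))⟩
  · refine ⟨S, hS, fun x hx => ?_⟩
    have hsub : sball ({p | p.1 = p.2} ∪ S ×ˢ S) x ⊆ {x} := by
      rintro y (h | h) <;> rcases h with h | h
      · exact h.symm
      · exact absurd h.1 hx
      · exact h
      · exact absurd h.2 hx
    calc EMetric.diam _ ≤ EMetric.diam ((fun y : ↥(isolatedPoints K) => f y.val) '' {x}) :=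
          EMetric.diam_mono (Set.image_mono hsub)
      _ = 0 := by simp; exact Metric.ediam_singleton
      _ < ENNReal.ofReal ε := ENNReal.ofReal_pos.mpr hε


lemma dist_le_of_diam_lt {A : Set ↥(isolatedPoints K)} {f : K → ℝ} {δ : ℝ}
    (h : EMetric.diam ((fun y : ↥(isolatedPoints K) => f y.val) '' A) < ENNReal.ofReal δ)
    {a b : ↥(isolatedPoints K)} (ha : a ∈ A) (hb : b ∈ A) :
    dist (f a.val) (f b.val) < δ := by
  rw [← edist_lt_ofReal]
  exact lt_of_le_of_lt (EMetric.edist_le_diam_of_mem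
    (Set.mem_image_of_mem (fun y : ↥(isolatedPoints K) => f y.val) ha)
    (Set.mem_image_of_mem (fun y : ↥(isolatedPoints K) => f y.val) hb)) h

lemma good_comp {E F : Set (↥(isolatedPoints K) × ↥(isolatedPoints K))}
    (hE : Good K E) (hF : Good K F) :
    Good K (entComp E (entInv F) ∪ {p | p.1 = p.2}) := by
  obtain ⟨hEe, ⟨n, hn⟩, hEf⟩ := hE
  obtain ⟨hFe, ⟨m, hm⟩, hFf⟩ := hF
  set G := entComp E (entInv F) ∪ {p | p.1 = p.2} with hGdef
  have hsub : ∀ x, sball G x ⊆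
      insert x ((⋃ y ∈ sball E x, sball F y) ∪ ⋃ y ∈ sball F x, sball E y) := by
    rintro x z ((⟨y, hy1, hy2⟩ | h) | (⟨y, hy1, hy2⟩ | h))
    · -- (x,z) ∈ E ∘ F⁻¹ : (x,y) ∈ E, (z,y) ∈ F
      exact Or.inr (Or.inl (Set.mem_biUnion (Or.inl hy1) (Or.inr hy2)))
    · exact Or.inl h.symm
    · -- (z,x) ∈ E ∘ F⁻¹ : (z,y) ∈ E, (x,y) ∈ F
      exact Or.inr (Or.inr (Set.mem_biUnion (Or.inl hy2) (Or.inr hy1)))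
    · exact Or.inl h
  refine ⟨fun x => Or.inr rfl, ⟨1 + (n * m + m * n), fun x => ?_⟩, fun f hf ε hε => ?_⟩
  · -- cardinality bound
    have hfin1 : (⋃ y ∈ sball E x, sball F y).Finite :=
      (hn x).1.biUnion (fun y _ => (hm y).1)
    have hfin2 : (⋃ y ∈ sball F x, sball E y).Finite :=
      (hm x).1.biUnion (fun y _ => (hn y).1)
    have hfin : (insert x ((⋃ y ∈ sball E x, sball F y) ∪
        ⋃ y ∈ sball F x, sball E y)).Finite := ((hfin1.union hfin2).insert x)
    refine ⟨hfin.subset (hsub x), le_trans (Set.ncard_le_ncard (hsub x) hfin) ?_⟩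
    have c1 : (⋃ y ∈ sball E x, sball F y).ncard ≤ n * m :=
      le_trans (ncard_biUnion_le (hn x).1 (fun y => (hm y).1) (fun y => (hm y).2))
        (Nat.mul_le_mul_right m (hn x).2)
    have c2 : (⋃ y ∈ sball F x, sball E y).ncard ≤ m * n :=
      le_trans (ncard_biUnion_le (hm x).1 (fun y => (hn y).1) (fun y => (hn y).2))
        (Nat.mul_le_mul_right n (hm x).2)
    have c3 := Set.ncard_insert_le x ((⋃ y ∈ sball E x, sball F y) ∪
        ⋃ y ∈ sball F x, sball E y)
    have c4 := Set.ncard_union_le (⋃ y ∈ sball E x, sball F y)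
        (⋃ y ∈ sball F x, sball E y)
    omega
  · -- slowly oscillating for continuous functions
    obtain ⟨BE, hBEfin, hBE⟩ := hEf f hf (ε/8) (by linarith)
    obtain ⟨BF, hBFfin, hBF⟩ := hFf f hf (ε/8) (by linarith)
    refine ⟨BE ∪ BF ∪ (⋃ b ∈ BF, sball E b) ∪ ⋃ b ∈ BE, sball F b,
      ((hBEfin.union hBFfin).union (hBFfin.biUnion fun b _ => (hn b).1)).union
        (hBEfin.biUnion fun b _ => (hm b).1), fun x hx => ?_⟩
    have hxE : x ∉ BE := fun h => hx (Or.inl (Or.inl (Or.inl h)))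
    have hxF : x ∉ BF := fun h => hx (Or.inl (Or.inl (Or.inr h)))
    have hxEF : ∀ y ∈ sball E x, y ∉ BF := by
      intro y hy hyB
      exact hx (Or.inl (Or.inr (Set.mem_biUnion hyB (mem_sball_comm.mp hy))))
    have hxFE : ∀ y ∈ sball F x, y ∉ BE := by
      intro y hy hyB
      exact hx (Or.inr (Set.mem_biUnion hyB (mem_sball_comm.mp hy)))
    -- every point of sball G x has f-value within ε/4 of f x
    have key : ∀ z ∈ sball G x, dist (f z.val) (f x.val) ≤ ε/4 := by
      intro z hz
      rcases hsub x hz with rfl | (hz | hz)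
      · simp only [dist_self]; positivity
      · obtain ⟨y, hy, hzy⟩ := Set.mem_iUnion₂.mp hz
        have d1 : dist (f y.val) (f x.val) < ε/8 :=
          dist_le_of_diam_lt (hBE x hxE) hy (self_mem_sball hEe x)
        have d2 : dist (f z.val) (f y.val) < ε/8 :=
          dist_le_of_diam_lt (hBF y (hxEF y hy)) hzy (self_mem_sball hFe y)
        calc dist (f z.val) (f x.val) ≤ dist (f z.val) (f y.val) +
              dist (f y.val) (f x.val) := dist_triangle _ _ _
          _ ≤ ε/4 := by linarith
      · obtain ⟨y, hy, hzy⟩ := Set.mem_iUnion₂.mp hz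
        have d1 : dist (f y.val) (f x.val) < ε/8 :=
          dist_le_of_diam_lt (hBF x hxF) hy (self_mem_sball hFe x)
        have d2 : dist (f z.val) (f y.val) < ε/8 :=
          dist_le_of_diam_lt (hBE y (hxFE y hy)) hzy (self_mem_sball hEe y)
        calc dist (f z.val) (f x.val) ≤ dist (f z.val) (f y.val) +
              dist (f y.val) (f x.val) := dist_triangle _ _ _
          _ ≤ ε/4 := by linarith
    have hdiam : EMetric.diam ((fun y : ↥(isolatedPoints K) => f y.val) '' sball G x)
        ≤ ENNReal.ofReal (ε/2) := by
      refine EMetric.diam_le ?_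
      rintro _ ⟨z1, hz1, rfl⟩ _ ⟨z2, hz2, rfl⟩
      rw [edist_dist]
      refine ENNReal.ofReal_le_ofReal ?_
      calc dist (f z1.val) (f z2.val) ≤ dist (f z1.val) (f x.val) +
            dist (f x.val) (f z2.val) := dist_triangle _ _ _
        _ ≤ ε/2 := by
            have := key z1 hz1
            have := key z2 hz2
            rw [dist_comm (f x.val)] at *
            linarith [key z2 hz2]
    exact lt_of_le_of_lt hdiam
      ((ENNReal.ofReal_lt_ofReal_iff hε).mpr (by linarith))


theorem ecal_coarse : IsCoarseStructure (Ecal K) := by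
  constructor
  · exact fun E hE => hE.1
  · intro p
    refine ⟨{q | q.1 = q.2} ∪ ({p.1, p.2} : Set _) ×ˢ ({p.1, p.2} : Set _),
      good_finset (Set.toFinite _), Or.inr ⟨Or.inl rfl, Or.inr rfl⟩⟩
  · intro E hE F hF
    exact ⟨entComp E (entInv F) ∪ {p | p.1 = p.2}, good_comp hE hF, Set.subset_union_left⟩
  · exact fun E F hEe hEF hF => good_downward hEe hEF hF

theorem ecal_finitary : IsFinitaryCoarse (Ecal K) := by
  intro E hE
  obtain ⟨-, ⟨n, hn⟩, -⟩ := hE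
  exact ⟨n, fun x => ⟨(hn x).1.subset (entBall_subset_sball E x),
    le_trans (Set.ncard_le_ncard (entBall_subset_sball E x) (hn x).1) (hn x).2⟩⟩

lemma finite_of_isBoundedSet {B : Set ↥(isolatedPoints K)} (h : IsBoundedSet (Ecal K) B) :
    B.Finite := by
  obtain ⟨E, hE, x, hBx⟩ := h
  obtain ⟨-, ⟨n, hn⟩, -⟩ := hE
  exact (hn x).1.subset (le_trans hBx (entBall_subset_sball E x))

lemma isBoundedSet_of_finite [Nonempty ↥(isolatedPoints K)]
    {B : Set ↥(isolatedPoints K)} (h : B.Finite) : IsBoundedSet (Ecal K) B := by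
  obtain ⟨x₀⟩ := ‹Nonempty ↥(isolatedPoints K)›
  refine ⟨{p | p.1 = p.2} ∪ (insert x₀ B) ×ˢ (insert x₀ B), good_finset (h.insert x₀),
    x₀, fun b hb => Or.inr ⟨Or.inl rfl, Or.inr hb⟩⟩


lemma extract2 {α β : Type*} (a : ℕ → α) (b : ℕ → β)
    (ha : ∀ x, {n | a n = x}.Finite) (hb : ∀ y, {n | b n = y}.Finite) :
    ∃ g : ℕ → ℕ, StrictMono g ∧
      ∀ k l, k < l → a (g l) ≠ a (g k) ∧ b (g l) ≠ b (g k) := by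
  have key : ∀ N : ℕ, ∃ m, N < m ∧ ∀ j ≤ N, a m ≠ a j ∧ b m ≠ b j := by
    intro N
    have hfin : ({n | ∃ j ≤ N, a n = a j ∨ b n = b j} : Set ℕ).Finite := by
      have heq : {n | ∃ j ≤ N, a n = a j ∨ b n = b j} =
          ⋃ j ∈ Set.Iic N, ({n | a n = a j} ∪ {n | b n = b j}) := by
        ext n
        simp only [Set.mem_setOf_eq, Set.mem_iUnion, Set.mem_Iic, Set.mem_union,
          exists_prop]
      rw [heq]
      exact (Set.finite_Iic N).biUnion fun j _ => (ha (a j)).union (hb (b j))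
    obtain ⟨M, hM⟩ := hfin.bddAbove
    refine ⟨M + N + 1, by omega, fun j hj => ?_⟩
    by_contra hcon
    have hmem : M + N + 1 ∈ {n | ∃ j ≤ N, a n = a j ∨ b n = b j} := by
      refine ⟨j, hj, ?_⟩
      by_cases h1 : a (M + N + 1) = a j
      · exact Or.inl h1
      · exact Or.inr (by tauto)
    have := hM hmem
    omega
  choose f hf1 hf2 using key
  refine ⟨fun k => Nat.rec 0 (fun _ ih => f ih) k, ?_, ?_⟩
  · exact strictMono_nat_of_lt_succ fun k => hf1 _
  · have hmono : Monotone (fun k => (Nat.rec 0 (fun _ ih => f ih) k : ℕ)) :=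
      (strictMono_nat_of_lt_succ fun k => hf1 _).monotone
    intro k l hkl
    obtain ⟨l', rfl⟩ : ∃ l', l = l' + 1 := ⟨l - 1, by omega⟩
    exact hf2 _ _ (hmono (by omega : k ≤ l'))

variable [T2Space K]

lemma fibers_finite {z : K} (hz : z ∉ isolatedPoints K) {u : ℕ → ↥(isolatedPoints K)}
    (hu : Tendsto (fun n => (u n).val) atTop (𝓝 z)) (x : ↥(isolatedPoints K)) :
    {n | u n = x}.Finite := by
  by_contra hinf
  rw [Set.not_infinite.symm, not_not] at hinf
  have hfreq : ∃ᶠ n in atTop, (u n).val ∈ ({x.val} : Set K) := by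
    rw [Nat.frequently_atTop_iff_infinite]
    exact hinf.mono (by intro n hn; simp only [Set.mem_setOf_eq] at hn ⊢; rw [hn]; rfl)
  have hcl : z ∈ closure ({x.val} : Set K) :=
    mem_closure_of_frequently_of_tendsto hfreq hu
  rw [IsClosed.closure_eq isClosed_singleton] at hcl
  rw [Set.mem_singleton_iff] at hcl
  subst hcl
  exact hz x.property


lemma sep_contra [FrechetUrysohnSpace K] {φ : ↥(isolatedPoints K) → ℝ}
    (hso : SlowlyOscillating (Ecal K) φ) {z : K} {A B : Set ↥(isolatedPoints K)}
    (hA : z ∈ closure (Subtype.val '' A)) (hB : z ∈ closure (Subtype.val '' B))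
    {ε : ℝ} (hε : 0 < ε) (sep : ∀ a ∈ A, ∀ b ∈ B, ε ≤ |φ a - φ b|) : False := by
  by_cases hiso : z ∈ isolatedPoints K
  · -- z isolated: z itself lies in both A and B
    obtain ⟨p, hp, a, haA, hav⟩ := mem_closure_iff.mp hA {z} hiso rfl
    obtain ⟨q, hq, b, hbB, hbv⟩ := mem_closure_iff.mp hB {z} hiso rfl
    rw [Set.mem_singleton_iff] at hp hq
    have hab : a = b := Subtype.val_injective (by rw [hav, hbv, hp, hq])
    have := sep a haA b hbB
    rw [hab] at this
    simp at this
    linarith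
  · -- z not isolated
    obtain ⟨sa, hsaA, hsa⟩ := mem_closure_iff_seq_limit.mp hA
    obtain ⟨sb, hsbB, hsb⟩ := mem_closure_iff_seq_limit.mp hB
    choose aa haaA haav using hsaA
    choose bb hbbB hbbv using hsbB
    have hta : Tendsto (fun n => (aa n).val) atTop (𝓝 z) := by
      simpa only [haav] using hsa
    have htb : Tendsto (fun n => (bb n).val) atTop (𝓝 z) := by
      simpa only [hbbv] using hsb
    obtain ⟨g, hg, hginj⟩ := extract2 aa bb
      (fun x => fibers_finite hiso hta x) (fun x => fibers_finite hiso htb x)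
    set a' : ℕ → ↥(isolatedPoints K) := fun n => aa (g n) with ha'def
    set b' : ℕ → ↥(isolatedPoints K) := fun n => bb (g n) with hb'def
    have ha't : Tendsto (fun n => (a' n).val) atTop (𝓝 z) :=
      hta.comp hg.tendsto_atTop
    have hb't : Tendsto (fun n => (b' n).val) atTop (𝓝 z) :=
      htb.comp hg.tendsto_atTop
    have ha'inj : ∀ k l, k ≠ l → a' l ≠ a' k := by
      intro k l hkl
      rcases lt_or_gt_of_ne hkl with h | h
      · exact fun hc => (hginj k l h).1 hc
      · exact fun hc => (hginj l k h).1 hc.symm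
    have hb'inj : ∀ k l, k ≠ l → b' l ≠ b' k := by
      intro k l hkl
      rcases lt_or_gt_of_ne hkl with h | h
      · exact fun hc => (hginj k l h).2 hc
      · exact fun hc => (hginj l k h).2 hc.symm
    have hsubA : ∀ x, {n | a' n = x}.Subsingleton := by
      intro x k hk l hl
      by_contra hkl
      exact ha'inj k l hkl (hl.trans hk.symm)
    have hsubB : ∀ x, {n | b' n = x}.Subsingleton := by
      intro x k hk l hl
      by_contra hkl
      exact hb'inj k l hkl (hl.trans hk.symm)
    set E : Set (↥(isolatedPoints K) × ↥(isolatedPoints K)) :=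
      {p | p.1 = p.2} ∪ ⋃ n, ({(a' n, b' n), (b' n, a' n)} : Set _) with hEdef
    have hpairE : ∀ n, (a' n, b' n) ∈ E :=
      fun n => Or.inr (Set.mem_iUnion.mpr ⟨n, Or.inl rfl⟩)
    have hsub : ∀ x, sball E x ⊆
        insert x (b' '' {n | a' n = x} ∪ a' '' {n | b' n = x}) := by
      rintro x y (h | h) <;> rcases h with h | h
      · exact Or.inl h.symm
      · obtain ⟨n, hn⟩ := Set.mem_iUnion.mp h
        rcases hn with hn | hn
        · injection hn with h1 h2
          exact Or.inr (Or.inl ⟨n, h1.symm, h2.symm⟩)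
        · injection hn with h1 h2
          exact Or.inr (Or.inr ⟨n, h1.symm, h2.symm⟩)
      · exact Or.inl h
      · obtain ⟨n, hn⟩ := Set.mem_iUnion.mp h
        rcases hn with hn | hn
        · injection hn with h1 h2
          exact Or.inr (Or.inr ⟨n, h2.symm, h1.symm⟩)
        · injection hn with h1 h2
          exact Or.inr (Or.inl ⟨n, h2.symm, h1.symm⟩)
    have hGood : Good K E := by
      refine ⟨fun x => Or.inl rfl, ⟨3, fun x => ?_⟩, fun f hf ε' hε' => ?_⟩
      · have hfin : (insert x (b' '' {n | a' n = x} ∪ a' '' {n | b' n = x})).Finite :=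
          (((hsubA x).image b').finite.union ((hsubB x).image a').finite).insert x
        refine ⟨hfin.subset (hsub x), le_trans (Set.ncard_le_ncard (hsub x) hfin) ?_⟩
        have c1 := Set.ncard_insert_le x (b' '' {n | a' n = x} ∪ a' '' {n | b' n = x})
        have c2 := Set.ncard_union_le (b' '' {n | a' n = x}) (a' '' {n | b' n = x})
        have c3 : (b' '' {n | a' n = x}).ncard ≤ 1 := by
          rcases ((hsubA x).image b').eq_empty_or_singleton with h | ⟨w, h⟩ <;>
            rw [h] <;> simp
        have c4 : (a' '' {n | b' n = x}).ncard ≤ 1 := by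
          rcases ((hsubB x).image a').eq_empty_or_singleton with h | ⟨w, h⟩ <;>
            rw [h] <;> simp
        omega
      · -- continuous functions slowly oscillate on E
        have tfa : Tendsto (fun n => f (a' n).val) atTop (𝓝 (f z)) :=
          (hf.tendsto z).comp ha't
        have tfb : Tendsto (fun n => f (b' n).val) atTop (𝓝 (f z)) :=
          (hf.tendsto z).comp hb't
        have hev : ∀ᶠ n in atTop, dist (f (a' n).val) (f z) < ε'/4 ∧
            dist (f (b' n).val) (f z) < ε'/4 :=
          (Metric.tendsto_nhds.mp tfa (ε'/4) (by linarith)).and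
            (Metric.tendsto_nhds.mp tfb (ε'/4) (by linarith))
        obtain ⟨N, hN⟩ := eventually_atTop.mp hev
        refine ⟨a' '' Set.Iio N ∪ b' '' Set.Iio N,
          ((Set.finite_Iio N).image a').union ((Set.finite_Iio N).image b'),
          fun x hx => ?_⟩
        have hxa : ∀ n, a' n = x → N ≤ n := by
          intro n hn
          by_contra hc
          exact hx (Or.inl ⟨n, Set.mem_Iio.mpr (by omega), hn⟩)
        have hxb : ∀ n, b' n = x → N ≤ n := by
          intro n hn
          by_contra hc
          exact hx (Or.inr ⟨n, Set.mem_Iio.mpr (by omega), hn⟩)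
        -- every elt of sball E x that's ≠ x is within ε'/4, and if one exists so is x
        by_cases htriv : sball E x ⊆ {x}
        · calc EMetric.diam ((fun y : ↥(isolatedPoints K) => f y.val) '' sball E x)
              ≤ EMetric.diam ((fun y : ↥(isolatedPoints K) => f y.val) '' {x}) :=
                EMetric.diam_mono (Set.image_mono htriv)
            _ = 0 := by simp; exact Metric.ediam_singleton
            _ < ENNReal.ofReal ε' := ENNReal.ofReal_pos.mpr hε'
        · have hkey : ∀ w ∈ sball E x, dist (f w.val) (f z) < ε'/4 := by
            -- first: x itself is on one of the sequences with index ≥ N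
            have hxseq : dist (f x.val) (f z) < ε'/4 := by
              rw [Set.not_subset] at htriv
              obtain ⟨y, hy, hyx⟩ := htriv
              rcases hsub x hy with rfl | (⟨n, hn1, hn2⟩ | ⟨n, hn1, hn2⟩)
              · exact absurd rfl hyx
              · rw [← hn1]
                exact (hN n (hxa n hn1)).1
              · rw [← hn1]
                exact (hN n (hxb n hn1)).2
            intro w hw
            rcases hsub x hw with rfl | (⟨n, hn1, hn2⟩ | ⟨n, hn1, hn2⟩)
            · exact hxseq
            · rw [← hn2]
              exact (hN n (hxa n hn1)).2
            · rw [← hn2]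
              exact (hN n (hxb n hn1)).1
          have hdiam : EMetric.diam
              ((fun y : ↥(isolatedPoints K) => f y.val) '' sball E x)
              ≤ ENNReal.ofReal (ε'/2) := by
            refine EMetric.diam_le ?_
            rintro _ ⟨w1, hw1, rfl⟩ _ ⟨w2, hw2, rfl⟩
            rw [edist_dist]
            refine ENNReal.ofReal_le_ofReal ?_
            have d1 := hkey w1 hw1
            have d2 := hkey w2 hw2
            calc dist (f w1.val) (f w2.val)
                ≤ dist (f w1.val) (f z) + dist (f z) (f w2.val) := dist_triangle _ _ _
              _ ≤ ε'/2 := by rw [dist_comm (f z)]; linarith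
          exact lt_of_le_of_lt hdiam
            ((ENNReal.ofReal_lt_ofReal_iff hε').mpr (by linarith))
    -- now contradict slow oscillation of φ
    obtain ⟨B₀, hB₀b, hB₀⟩ := hso ε hε E hGood
    have hB₀fin : B₀.Finite := finite_of_isBoundedSet hB₀b
    have hidxfin : {n | a' n ∈ B₀}.Finite := by
      have heq : {n | a' n ∈ B₀} = ⋃ x ∈ B₀, {n | a' n = x} := by
        ext n
        simp only [Set.mem_setOf_eq, Set.mem_iUnion, exists_prop]
        constructor
        · exact fun h => ⟨a' n, h, rfl⟩
        · rintro ⟨x, hx, rfl⟩; exact hx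
      rw [heq]
      exact hB₀fin.biUnion fun x _ => (hsubA x).finite
    obtain ⟨M, hM⟩ := hidxfin.bddAbove
    have hnot : a' (M + 1) ∉ B₀ := fun hc => by
      have := hM hc
      omega
    have hdiam := hB₀ (a' (M + 1)) hnot
    have hmem1 : φ (a' (M + 1)) ∈ φ '' entBall E (a' (M + 1)) :=
      Set.mem_image_of_mem φ (Or.inl rfl)
    have hmem2 : φ (b' (M + 1)) ∈ φ '' entBall E (a' (M + 1)) :=
      Set.mem_image_of_mem φ (hpairE (M + 1))
    have hlt : dist (φ (a' (M + 1))) (φ (b' (M + 1))) < ε := by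
      rw [← edist_lt_ofReal]
      exact lt_of_le_of_lt (EMetric.edist_le_diam_of_mem hmem1 hmem2) hdiam
    have hge := sep (a' (M + 1)) (haaA (g (M + 1))) (b' (M + 1)) (hbbB (g (M + 1)))
    rw [Real.dist_eq] at hlt
    linarith [abs_nonneg (φ (a' (M + 1)) - φ (b' (M + 1)))]


lemma exists_limit [FrechetUrysohnSpace K] {φ : ↥(isolatedPoints K) → ℝ}
    (hb : Bornology.IsBounded (Set.range φ)) (hso : SlowlyOscillating (Ecal K) φ)
    {z : K} {u : ℕ → ↥(isolatedPoints K)}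
    (hu : Tendsto (fun n => (u n).val) atTop (𝓝 z)) :
    ∃ c, Tendsto (fun n => φ (u n)) atTop (𝓝 c) := by
  obtain ⟨c, -, σ, hσ, hcσ⟩ := tendsto_subseq_of_bounded hb
    (fun n => Set.mem_range_self (u n) : ∀ n, φ (u n) ∈ Set.range φ)
  refine ⟨c, ?_⟩
  by_contra hno
  rw [Metric.tendsto_atTop] at hno
  push_neg at hno
  obtain ⟨ε, hε, hfreq⟩ := hno
  have hclA : z ∈ closure (Subtype.val ''
      {x : ↥(isolatedPoints K) | ε ≤ dist (φ x) c ∧ x ∈ Set.range u}) := by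
    refine mem_closure_of_frequently_of_tendsto ?_ hu
    rw [frequently_atTop]
    intro N
    obtain ⟨n, hn, hdn⟩ := hfreq N
    exact ⟨n, hn, Set.mem_image_of_mem _ ⟨hdn, Set.mem_range_self n⟩⟩
  have hclB : z ∈ closure (Subtype.val ''
      {x : ↥(isolatedPoints K) | dist (φ x) c ≤ ε/2}) := by
    have hev : ∀ᶠ k in atTop, dist (φ (u (σ k))) c ≤ ε/2 := by
      filter_upwards [Metric.tendsto_nhds.mp hcσ (ε/2) (by linarith)] with k hk
      exact le_of_lt hk
    refine mem_closure_of_frequently_of_tendsto ?_ (hu.comp hσ.tendsto_atTop)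
    exact (hev.mono fun k hk => ⟨u (σ k), hk, rfl⟩).frequently
  refine sep_contra hso hclA hclB (by linarith : (0:ℝ) < ε/2) ?_
  rintro a ⟨ha, -⟩ b hb'
  have : dist (φ a) (φ b) ≥ ε - ε/2 := by
    have := dist_triangle (φ a) (φ b) c
    have h2 : dist (φ b) c ≤ ε/2 := hb'
    linarith [dist_comm (φ a) c ▸ ha]
  rw [Real.dist_eq] at this
  linarith

lemma exists_extension [CompactSpace K] [FrechetUrysohnSpace K]
    (hdense : Dense (isolatedPoints K)) {φ : ↥(isolatedPoints K) → ℝ}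
    (hb : Bornology.IsBounded (Set.range φ)) (hso : SlowlyOscillating (Ecal K) φ) :
    ∃ f : K → ℝ, Continuous f ∧ ∀ x : ↥(isolatedPoints K), f x.val = φ x := by
  have hseq : ∀ z : K, ∃ u : ℕ → ↥(isolatedPoints K),
      Tendsto (fun n => (u n).val) atTop (𝓝 z) := by
    intro z
    have hz : z ∈ closure (Set.range (Subtype.val : ↥(isolatedPoints K) → K)) := by
      rw [Subtype.range_val]
      exact hdense z
    obtain ⟨s, hs, hst⟩ := mem_closure_iff_seq_limit.mp hz
    choose uu huu using hs
    exact ⟨uu, by simpa only [huu] using hst⟩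
  choose u hu using hseq
  have hlim : ∀ z : K, ∃ c, Tendsto (fun n => φ (u z n)) atTop (𝓝 c) :=
    fun z => exists_limit hb hso (hu z)
  choose f hf using hlim
  have hfx : ∀ x : ↥(isolatedPoints K), f x.val = φ x := by
    intro x
    have hev : ∀ᶠ n in atTop, φ (u x.val n) = φ x := by
      have hmem : ({x.val} : Set K) ∈ 𝓝 x.val := (x.property).mem_nhds rfl
      filter_upwards [(hu x.val).eventually_mem hmem] with n hn
      rw [Subtype.val_injective (hn : (u x.val n).val = x.val)]
    have h1 : Tendsto (fun n => φ (u x.val n)) atTop (𝓝 (φ x)) :=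
      Tendsto.congr' (hev.mono fun n hn => hn.symm) tendsto_const_nhds
    exact tendsto_nhds_unique (hf x.val) h1
  refine ⟨f, ?_, hfx⟩
  rw [continuous_iff_seqContinuous]
  intro zs z hzs
  by_contra hno
  rw [Metric.tendsto_atTop] at hno
  push_neg at hno
  obtain ⟨ε, hε, hfr⟩ := hno
  have hw : ∀ w : K, ε ≤ dist (f w) (f z) →
      w ∈ closure (Subtype.val '' {x : ↥(isolatedPoints K) | ε/2 ≤ dist (φ x) (f z)}) := by
    intro w hwd
    have hev : ∀ᶠ n in atTop, ε/2 ≤ dist (φ (u w n)) (f z) := by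
      filter_upwards [Metric.tendsto_nhds.mp (hf w) (ε/2) (by linarith)] with n hn
      have := dist_triangle (f w) (φ (u w n)) (f z)
      rw [dist_comm (f w) (φ (u w n))] at this
      linarith
    exact mem_closure_of_frequently_of_tendsto
      ((hev.mono fun n hn => ⟨u w n, hn, rfl⟩).frequently) (hu w)
  have hclA : z ∈ closure (Subtype.val ''
      {x : ↥(isolatedPoints K) | ε/2 ≤ dist (φ x) (f z)}) := by
    have hfr2 : ∃ᶠ n in atTop, zs n ∈ closure (Subtype.val ''
        {x : ↥(isolatedPoints K) | ε/2 ≤ dist (φ x) (f z)}) := by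
      rw [frequently_atTop]
      intro N
      obtain ⟨n, hn, hdn⟩ := hfr N
      exact ⟨n, hn, hw (zs n) hdn⟩
    have := mem_closure_of_frequently_of_tendsto hfr2 hzs
    rwa [closure_closure] at this
  have hclB : z ∈ closure (Subtype.val ''
      {x : ↥(isolatedPoints K) | dist (φ x) (f z) ≤ ε/4}) := by
    have hev : ∀ᶠ n in atTop, dist (φ (u z n)) (f z) ≤ ε/4 := by
      filter_upwards [Metric.tendsto_nhds.mp (hf z) (ε/4) (by linarith)] with n hn
      exact le_of_lt hn
    exact mem_closure_of_frequently_of_tendsto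
      ((hev.mono fun n hn => ⟨u z n, hn, rfl⟩).frequently) (hu z)
  refine sep_contra hso hclA hclB (by linarith : (0:ℝ) < ε/4) ?_
  intro a ha b hb'
  have h1 : ε/2 ≤ dist (φ a) (f z) := ha
  have h2 : dist (φ b) (f z) ≤ ε/4 := hb'
  rw [Real.dist_eq] at h1 h2
  have h4 := abs_sub_abs_le_abs_sub (φ a - f z) (φ b - f z)
  have h3 : φ a - f z - (φ b - f z) = φ a - φ b := by ring
  rw [h3] at h4
  linarith


lemma restriction_mem [CompactSpace K] [Nonempty ↥(isolatedPoints K)] {f : K → ℝ}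
    (hf : Continuous f) :
    (fun x : ↥(isolatedPoints K) => f x.val) ∈ soSet (Ecal K) ℝ := by
  constructor
  · have hsub : Set.range (fun x : ↥(isolatedPoints K) => f x.val) ⊆ Set.range f := by
      rintro _ ⟨x, rfl⟩
      exact ⟨x.val, rfl⟩
    exact ((isCompact_range hf).isBounded).subset hsub
  · intro ε hε E hE
    obtain ⟨B, hBfin, hB⟩ := hE.2.2 f hf ε hε
    refine ⟨B, isBoundedSet_of_finite hBfin, fun x hx => ?_⟩
    exact lt_of_le_of_lt
      (EMetric.diam_mono (Set.image_mono (entBall_subset_sball E x))) (hB x hx)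

theorem main [CompactSpace K] [FrechetUrysohnSpace K]
    (hdense : Dense (isolatedPoints K)) :
    Nonempty (K ≃ₜ HComp (Ecal K) ℝ) := by
  classical
  set 𝓔 := Ecal K with h𝓔
  have hext : ∀ φ : ↥(soSet 𝓔 ℝ), ∃ f : K → ℝ, Continuous f ∧
      ∀ x : ↥(isolatedPoints K), f x.val = φ.1 x :=
    fun φ => exists_extension hdense φ.2.1 φ.2.2
  choose F hFc hFx using hext
  set Φ : K → (↥(soSet 𝓔 ℝ) → ℝ) := fun z φ => F φ z with hΦdef
  have hΦcont : Continuous Φ := continuous_pi fun φ => hFc φ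
  have hΦι : ∀ x : ↥(isolatedPoints K), Φ x.val = deltaMap 𝓔 ℝ x := by
    intro x
    funext φ
    exact hFx φ x
  have himg : Φ '' Set.range (Subtype.val : ↥(isolatedPoints K) → K)
      = Set.range (deltaMap 𝓔 ℝ) := by
    rw [← Set.range_comp]
    have hcomp : Φ ∘ (Subtype.val : ↥(isolatedPoints K) → K) = deltaMap 𝓔 ℝ :=
      funext hΦι
    rw [hcomp]
  have hrangesub : Set.range Φ ⊆ hCompSet 𝓔 ℝ := by
    rintro _ ⟨z, rfl⟩
    have hz : z ∈ closure (Set.range (Subtype.val : ↥(isolatedPoints K) → K)) := by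
      rw [Subtype.range_val]
      exact hdense z
    have h1 : Φ z ∈ Φ '' closure (Set.range (Subtype.val : ↥(isolatedPoints K) → K)) :=
      Set.mem_image_of_mem Φ hz
    have h2 := image_closure_subset_closure_image (f := Φ) hΦcont
      (s := Set.range (Subtype.val : ↥(isolatedPoints K) → K))
    rw [himg] at h2
    exact h2 h1
  have hsup : hCompSet 𝓔 ℝ ⊆ Set.range Φ := by
    refine closure_minimal ?_ ((isCompact_range hΦcont).isClosed)
    rintro _ ⟨x, rfl⟩
    exact ⟨x.val, hΦι x⟩
  have hΦinj : Function.Injective Φ := by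
    intro z w hzw
    by_contra hne
    haveI : Nonempty K := ⟨z⟩
    haveI : Nonempty ↥(isolatedPoints K) := hdense.nonempty.to_subtype
    obtain ⟨fc, hf0, hf1, -⟩ := exists_continuous_zero_one_of_isClosed
      (isClosed_singleton (x := z)) (isClosed_singleton (x := w))
      (Set.disjoint_singleton.mpr hne)
    have hmem := restriction_mem (K := K) fc.continuous
    have hFeq : F ⟨_, hmem⟩ = fc := by
      refine Continuous.ext_on hdense (hFc _) fc.continuous ?_
      intro p hp
      exact hFx ⟨_, hmem⟩ ⟨p, hp⟩
    have h0 : Φ z ⟨_, hmem⟩ = 0 := by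
      show F ⟨_, hmem⟩ z = 0
      rw [hFeq]
      exact hf0 rfl
    have h1 : Φ w ⟨_, hmem⟩ = 1 := by
      show F ⟨_, hmem⟩ w = 1
      rw [hFeq]
      exact hf1 rfl
    rw [hzw, h1] at h0
    exact one_ne_zero h0
  have hbij : Function.Bijective
      (fun z => (⟨Φ z, hrangesub (Set.mem_range_self z)⟩ : HComp 𝓔 ℝ)) := by
    constructor
    · intro z w h
      exact hΦinj (congrArg Subtype.val h)
    · rintro ⟨y, hy⟩
      obtain ⟨z, hz⟩ := hsup hy
      exact ⟨z, Subtype.ext hz⟩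
  exact ⟨Continuous.homeoOfEquivCompactToT2 (f := Equiv.ofBijective _ hbij)
    (Continuous.subtype_mk hΦcont _)⟩

end Stmt14Aux

/-- Every Fréchet–Urysohn compact Hausdorff space with dense set of
isolated points is homeomorphic to the Higson compactification of some finitary
coarse space. -/
theorem statement14 (K : Type u) [TopologicalSpace K] [CompactSpace K] [T2Space K]
    [FrechetUrysohnSpace K] (hdense : Dense (isolatedPoints K)) :
    ∃ (X : Type u) (𝓔 : Set (Set (X × X))), IsCoarseStructure 𝓔 ∧ IsFinitaryCoarse 𝓔 ∧
      Nonempty (K ≃ₜ HComp 𝓔 ℝ) :=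
  ⟨↥(isolatedPoints K), Stmt14Aux.Ecal K, Stmt14Aux.ecal_coarse, Stmt14Aux.ecal_finitary,
    Stmt14Aux.main hdense⟩
end

section
/- Let K be a compactification containing two disjoint sets A, B ⊆ K' whose closures in K intersect and such that for any infinite sets I ⊆ A and J ⊆ B with cl(I) \ I = cl(J) \ J, the subspaces cl(I) and cl(J) of K are not homeomorphic. Then the compactification K is not soft. If moreover A ∪ B = K', then K is not 𝟚-soft, where 𝟚 = {0,1} with the {0,1}-valued metric. -/
open Set Filter Topology

universe u u₁ u₂ v w

/-- An isolated point in the closure of a set belongs to the set. -/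
lemma aux_isolated_mem {K : Type u} [TopologicalSpace K] {s : Set K} {z : K}
    (hz : z ∈ closure s) (hiso : z ∈ isolatedPoints K) : z ∈ s := by
  obtain ⟨w, hw1, hw2⟩ := mem_closure_iff.mp hz {z} hiso rfl
  rw [Set.mem_singleton_iff] at hw1
  subst hw1
  exact hw2

/-- Core lemma: a permutation in `homeoPerms K` moving an infinite subset of `A`
into `B` contradicts the non-homeomorphy hypothesis. -/
lemma aux_core {K : Type u} [TopologicalSpace K]
    (A B : Set ↥(isolatedPoints K))
    (hne : ∀ I J : Set ↥(isolatedPoints K), I ⊆ A → J ⊆ B → I.Infinite → J.Infinite →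
      closure (Subtype.val '' I) \ (Subtype.val '' I) =
        closure (Subtype.val '' J) \ (Subtype.val '' J) →
      ¬ Nonempty (↥(closure (Subtype.val '' I)) ≃ₜ ↥(closure (Subtype.val '' J))))
    (σ : Equiv.Perm ↥(isolatedPoints K)) (hσ : σ ∈ homeoPerms K)
    (S : Set ↥(isolatedPoints K)) (hSinf : S.Infinite) (hSA : S ⊆ A)
    (hSB : σ '' S ⊆ B) : False := by
  obtain ⟨h, hfix, hmap⟩ := hσ
  set I := S with hI
  set J := σ '' S with hJ
  have hval : h '' (Subtype.val '' I) = Subtype.val '' J := by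
    ext w
    constructor
    · rintro ⟨_, ⟨x, hx, rfl⟩, rfl⟩
      exact ⟨σ x, ⟨x, hx, rfl⟩, (hmap x).symm⟩
    · rintro ⟨_, ⟨x, hx, rfl⟩, rfl⟩
      exact ⟨x.val, ⟨x, hx, rfl⟩, hmap x⟩
  have hcl : h '' closure (Subtype.val '' I) = closure (Subtype.val '' J) := by
    rw [h.image_closure, hval]
  have hsubI : (Subtype.val '' I : Set K) ⊆ isolatedPoints K := by
    rintro _ ⟨x, _, rfl⟩; exact x.2
  have hsubJ : (Subtype.val '' J : Set K) ⊆ isolatedPoints K := by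
    rintro _ ⟨x, _, rfl⟩; exact x.2
  have hbd : closure (Subtype.val '' I) \ (Subtype.val '' I) =
      closure (Subtype.val '' J) \ (Subtype.val '' J) := by
    ext z
    constructor
    · rintro ⟨hz1, hz2⟩
      have hni : z ∉ isolatedPoints K := fun hzi => hz2 (aux_isolated_mem hz1 hzi)
      have hz' : h z ∈ closure (Subtype.val '' J) := hcl ▸ ⟨z, hz1, rfl⟩
      rw [hfix z hni] at hz'
      exact ⟨hz', fun hmem => hni (hsubJ hmem)⟩
    · rintro ⟨hz1, hz2⟩
      have hni : z ∉ isolatedPoints K := fun hzi => hz2 (aux_isolated_mem hz1 hzi)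
      have hz' : h z ∈ closure (Subtype.val '' J) := by rw [hfix z hni]; exact hz1
      rw [← hcl] at hz'
      obtain ⟨w, hw, hwe⟩ := hz'
      have hwz : w = z := h.injective (by rw [hwe, hfix z hni])
      subst hwz
      exact ⟨hw, fun hmem => hni (hsubI hmem)⟩
  have hJinf : J.Infinite := hSinf.image (σ.injective.injOn)
  refine hne I J hSA hSB hSinf hJinf hbd ⟨?_⟩
  exact (h.image (closure (Subtype.val '' I))).trans (Homeomorph.setCongr hcl)

lemma aux_inv_mem {K : Type u} [TopologicalSpace K] {σ : Equiv.Perm ↥(isolatedPoints K)}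
    (hσ : σ ∈ homeoPerms K) : σ⁻¹ ∈ homeoPerms K := by
  obtain ⟨h, hfix, hmap⟩ := hσ
  refine ⟨h.symm, fun z hz => ?_, fun x => ?_⟩
  · exact h.injective (by rw [h.apply_symm_apply, hfix z hz])
  · refine h.injective ?_
    rw [h.apply_symm_apply, hmap (σ⁻¹ x), ← Equiv.Perm.mul_apply, mul_inv_cancel, Equiv.Perm.one_apply]

/-- If a compactification `K` contains disjoint sets `A, B ⊆ K'` with
intersecting closures such that no infinite `I ⊆ A`, `J ⊆ B` with
`cl(I) \ I = cl(J) \ J` have homeomorphic closures, then `K` is not soft; and if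
moreover `A ∪ B = K'`, then `K` is not `𝟚`-soft. -/
theorem statement15 (K : Type u) [TopologicalSpace K] (hK : IsCompactification K)
    (A B : Set ↥(isolatedPoints K)) (hAB : Disjoint A B)
    (hcl : (closure (Subtype.val '' A) ∩ closure (Subtype.val '' B)).Nonempty)
    (hne : ∀ I J : Set ↥(isolatedPoints K), I ⊆ A → J ⊆ B → I.Infinite → J.Infinite →
      closure (Subtype.val '' I) \ (Subtype.val '' I) =
        closure (Subtype.val '' J) \ (Subtype.val '' J) →
      ¬ Nonempty (↥(closure (Subtype.val '' I)) ≃ₜ ↥(closure (Subtype.val '' J)))) :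
    ¬ IsSoft K ∧ (A ∪ B = Set.univ → ¬ IsMSoft K ↥({0, 1} : Set ℝ)) := by
  constructor
  · intro hsoft
    obtain ⟨σ, hσ, hinf⟩ := hsoft A B hAB hcl
    refine aux_core A B hne σ hσ {x | x ∈ A ∧ σ x ∈ B} hinf (fun x hx => hx.1) ?_
    rintro _ ⟨x, hx, rfl⟩; exact hx.2
  · intro hU hsoft
    classical
    have h01 : ((0:ℝ) ∈ ({0,1} : Set ℝ)) := by norm_num
    have h11 : ((1:ℝ) ∈ ({0,1} : Set ℝ)) := by norm_num
    set a0 : ↥({0,1} : Set ℝ) := ⟨0, h01⟩ with ha0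
    set a1 : ↥({0,1} : Set ℝ) := ⟨1, h11⟩ with ha1
    have hne01 : a0 ≠ a1 := by
      intro hcon
      have := congrArg Subtype.val hcon
      norm_num [ha0, ha1] at this
    set φ : ↥(isolatedPoints K) → ↥({0,1} : Set ℝ) :=
      fun x => if x ∈ A then a0 else a1 with hφ
    have hfinty : Finite ↥({0,1} : Set ℝ) :=
      Set.Finite.to_subtype ((Set.finite_singleton (1:ℝ)).insert 0)
    have hbdd : Bornology.IsBounded (Set.range φ) := (Set.toFinite _).isBounded
    obtain ⟨z, hzA, hzB⟩ := hcl
    have hdist : dist a0 a1 = 1 := by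
      rw [Subtype.dist_eq]; simp [ha0, ha1, Real.dist_eq]
    have hosc : 0 < oscAt φ z := by
      refine lt_of_lt_of_le (by norm_num : (0:ENNReal) < 1) ?_
      refine le_iInf fun O => le_iInf fun hO => le_iInf fun hzO => ?_
      obtain ⟨_, hwO, a, haA, rfl⟩ := mem_closure_iff.mp hzA O hO hzO
      obtain ⟨_, hvO, b, hbB, rfl⟩ := mem_closure_iff.mp hzB O hO hzO
      have hφa : φ a = a0 := if_pos haA
      have hφb : φ b = a1 := if_neg (fun hbA => hAB.ne_of_mem hbA hbB rfl)
      have hmem1 : a0 ∈ φ '' (Subtype.val ⁻¹' O) := ⟨a, hwO, hφa⟩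
      have hmem2 : a1 ∈ φ '' (Subtype.val ⁻¹' O) := ⟨b, hvO, hφb⟩
      calc (1:ENNReal) = edist a0 a1 := by
              rw [edist_dist, hdist]; simp
        _ ≤ EMetric.diam (φ '' (Subtype.val ⁻¹' O)) :=
              EMetric.edist_le_diam_of_mem hmem1 hmem2
    obtain ⟨σ, hσ, ε, hε, hT⟩ := hsoft φ hbdd ⟨z, hosc⟩
    have hTsub : {x : ↥(isolatedPoints K) | ε ≤ dist (φ (σ x)) (φ x)} ⊆
        {x | x ∈ A ∧ σ x ∈ B} ∪ {x | x ∈ B ∧ σ x ∈ A} := by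
      intro x hx
      simp only [Set.mem_setOf_eq] at hx
      have hne' : φ (σ x) ≠ φ x := by
        intro hcon
        rw [hcon, dist_self] at hx
        exact absurd hx (not_le.mpr hε)
      by_cases hxA : x ∈ A
      · left
        refine ⟨hxA, ?_⟩
        have hσxA : σ x ∉ A := by
          intro hcon
          exact hne' (by rw [hφ]; simp [hcon, hxA])
        have : σ x ∈ A ∪ B := hU ▸ Set.mem_univ _
        exact this.resolve_left hσxA
      · right
        have hxB : x ∈ B := ((hU ▸ Set.mem_univ x : x ∈ A ∪ B)).resolve_left hxA
        refine ⟨hxB, ?_⟩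
        by_contra hσxA
        exact hne' (by rw [hφ]; simp [hxA, hσxA])
    have := hT.mono hTsub
    rcases Set.infinite_union.mp this with hS | hS
    · refine aux_core A B hne σ hσ _ hS (fun x hx => hx.1) ?_
      rintro _ ⟨x, hx, rfl⟩; exact hx.2
    · refine aux_core A B hne σ⁻¹ (aux_inv_mem hσ)
        (σ '' {x | x ∈ B ∧ σ x ∈ A}) (hS.image σ.injective.injOn) ?_ ?_
      · rintro _ ⟨x, hx, rfl⟩; exact hx.2
      · rintro _ ⟨_, ⟨x, hx, rfl⟩, rfl⟩
        simpa using hx.1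
end

section
/- Let K be a compactification with G_{K',K} = FS_{K'}. Then K is equivalent to the Higson compactification of its permutation coarse space (K',𝓔_{K',K}) if and only if K is a Stone–Čech compactification of the discrete space K' (i.e., every bounded function K' → ℝ extends to a continuous function on K). -/
open Set Filter Topology

universe u u₁ u₂ v w

section Statement16Helpers

variable {X : Type u} {S : Set (Equiv.Perm X)}

lemma st16_finite_bounded (hfs : S = {σ : Equiv.Perm X | {x | σ x ≠ x}.Finite})
    (x₀ : X) (B : Set X) (hB : B.Finite) : IsBoundedSet (permCoarse S) B := by
  classical
  refine ⟨permEnt ((hB.toFinset.image (fun b => Equiv.swap x₀ b)) : Set (Equiv.Perm X)), ?_, x₀, ?_⟩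
  · refine ⟨fun x => Or.inl rfl, hB.toFinset.image (fun b => Equiv.swap x₀ b), ?_, subset_rfl⟩
    intro g hg
    simp only [Finset.coe_image, Set.mem_image, Finset.mem_coe, Set.Finite.mem_toFinset] at hg
    obtain ⟨b, hb, rfl⟩ := hg
    rw [hfs]
    refine Set.Finite.subset ((Set.finite_singleton b).insert x₀) ?_
    intro x hx
    by_contra hmem
    simp only [Set.mem_insert_iff, Set.mem_singleton_iff, not_or] at hmem
    exact hx (Equiv.swap_apply_of_ne_of_ne hmem.1 hmem.2)
  · intro b hb
    refine Or.inr ⟨Equiv.swap x₀ b, ?_, (Equiv.swap_apply_left x₀ b).symm⟩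
    simp only [Finset.coe_image, Set.mem_image, Finset.mem_coe, Set.Finite.mem_toFinset]
    exact ⟨b, hb, rfl⟩

lemma st16_so_all (hfs : S = {σ : Equiv.Perm X | {x | σ x ≠ x}.Finite})
    (x₀ : X) {M : Type v} [MetricSpace M] (φ : X → M) :
    SlowlyOscillating (permCoarse S) φ := by
  intro ε hε E hE
  obtain ⟨hEent, F, hF, hEF⟩ := hE
  have hsupp : ∀ g ∈ (F : Set (Equiv.Perm X)), {x | g x ≠ x}.Finite := by
    intro g hg
    have := hF hg
    rwa [hfs] at this
  refine ⟨insert x₀ (⋃ g ∈ (F : Set (Equiv.Perm X)), {x | g x ≠ x}),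
    st16_finite_bounded hfs x₀ _ ((F.finite_toSet.biUnion hsupp).insert x₀), ?_⟩
  intro x hx
  have hball : entBall E x ⊆ {x} := by
    intro y hy
    rcases hEF hy with h | ⟨g, hg, h⟩
    · exact h
    · have hgx : g x = x := by
        by_contra hne
        exact hx (Set.mem_insert_iff.mpr (Or.inr (Set.mem_biUnion hg hne)))
      exact Set.mem_singleton_iff.mpr (h.trans hgx)
  have h1 : φ '' entBall E x ⊆ {φ x} := by
    rintro _ ⟨a, ha, rfl⟩
    exact Set.mem_singleton_iff.mpr (congrArg φ (hball ha))
  have h2 : EMetric.diam (φ '' entBall E x) ≤ 0 := by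
    exact le_of_le_of_eq (EMetric.diam_mono h1) (by simp)
  exact lt_of_le_of_lt h2 (ENNReal.ofReal_pos.mpr hε)

end Statement16Helpers

/-- A compactification `K` with `G_{K',K} = FS_{K'}` is equivalent to the
Higson compactification of its permutation coarse space iff every bounded function
`K' → ℝ` extends to a continuous function on `K` (i.e. `K` is a Stone–Čech
compactification of the discrete space `K'`). -/
theorem statement16 (K : Type u) [TopologicalSpace K] (hK : IsCompactification K)
    (hfs : homeoPerms K =
      {σ : Equiv.Perm ↥(isolatedPoints K) | {x : ↥(isolatedPoints K) | σ x ≠ x}.Finite}) :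
    (∃ h : K ≃ₜ HComp (permCoarse (homeoPerms K)) ℝ,
        ∀ x : ↥(isolatedPoints K), h x.val = deltaEmb (permCoarse (homeoPerms K)) ℝ x) ↔
      (∀ φ : ↥(isolatedPoints K) → ℝ, Bornology.IsBounded (Set.range φ) →
        ∃ f : K → ℝ, Continuous f ∧ ∀ x : ↥(isolatedPoints K), f x.val = φ x) := by
  haveI : CompactSpace K := hK.1
  haveI : T2Space K := hK.2.1
  constructor
  · rintro ⟨h, hh⟩ φ hφ
    by_cases hne : Nonempty ↥(isolatedPoints K)
    · obtain ⟨x₀⟩ := hne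
      have hso := st16_so_all hfs x₀ φ
      refine ⟨(fun p : HComp (permCoarse (homeoPerms K)) ℝ => p.1 ⟨φ, hφ, hso⟩) ∘ h, ?_, ?_⟩
      · exact ((continuous_apply _).comp continuous_subtype_val).comp h.continuous
      · intro x
        show (h x.val).1 ⟨φ, hφ, hso⟩ = φ x
        rw [hh x]
        rfl
    · exact ⟨fun _ => 0, continuous_const, fun x => absurd ⟨x⟩ hne⟩
  · intro hext
    set 𝓔 := permCoarse (homeoPerms K) with h𝓔
    have hchoice : ∀ ψ : ↥(soSet 𝓔 ℝ), ∃ f : K → ℝ, Continuous f ∧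
        ∀ x : ↥(isolatedPoints K), f x.val = ψ.1 x := fun ψ => hext ψ.1 ψ.2.1
    choose ext hcont hres using hchoice
    set H : K → (↥(soSet 𝓔 ℝ) → ℝ) := fun z ψ => ext ψ z with hH
    have hHcont : Continuous H := continuous_pi (fun ψ => hcont ψ)
    have hHx : ∀ x : ↥(isolatedPoints K), H x.val = deltaMap 𝓔 ℝ x := by
      intro x
      funext ψ
      exact hres ψ x
    have hHimg : H '' (isolatedPoints K) = Set.range (deltaMap 𝓔 ℝ) := by
      ext p
      constructor
      · rintro ⟨z, hz, rfl⟩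
        exact ⟨⟨z, hz⟩, (hHx ⟨z, hz⟩).symm⟩
      · rintro ⟨x, rfl⟩
        exact ⟨x.val, x.2, hHx x⟩
    have hmem : ∀ z : K, H z ∈ hCompSet 𝓔 ℝ := by
      intro z
      have hz : z ∈ closure (isolatedPoints K) := hK.2.2 z
      have h2 := (image_closure_subset_closure_image hHcont) (Set.mem_image_of_mem H hz)
      rwa [hHimg] at h2
    set H' : K → HComp 𝓔 ℝ := fun z => ⟨H z, hmem z⟩ with hH'
    have hH'cont : Continuous H' := hHcont.subtype_mk hmem
    have hinj : Function.Injective H' := by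
      intro z w hzw
      by_contra hne
      haveI : Nonempty K := ⟨z⟩
      obtain ⟨y₀, hy₀⟩ := hK.2.2.nonempty
      obtain ⟨f, hf0, hf1, hf01⟩ := exists_continuous_zero_one_of_isClosed
        (isClosed_singleton (x := z)) (isClosed_singleton (x := w))
        (Set.disjoint_singleton.mpr hne)
      set φ : ↥(isolatedPoints K) → ℝ := fun x => f x.val with hφdef
      have hφb : Bornology.IsBounded (Set.range φ) := by
        refine (Metric.isBounded_Icc (0:ℝ) 1).subset ?_
        rintro _ ⟨x, rfl⟩
        exact hf01 x.val
      have hφso : SlowlyOscillating 𝓔 φ := st16_so_all hfs ⟨y₀, hy₀⟩ φ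
      set ψ : ↥(soSet 𝓔 ℝ) := ⟨φ, hφb, hφso⟩ with hψ
      have hext_eq : ext ψ = fun k => f k := by
        refine Continuous.ext_on hK.2.2 (hcont ψ) f.continuous ?_
        intro a ha
        exact hres ψ ⟨a, ha⟩
      have hzval : H z ψ = f z := by
        show ext ψ z = f z
        rw [hext_eq]
      have hwval : H w ψ = f w := by
        show ext ψ w = f w
        rw [hext_eq]
      have : H z = H w := congrArg Subtype.val hzw
      have : f z = f w := by rw [← hzval, ← hwval, this]
      rw [hf0 rfl, hf1 rfl] at this
      norm_num at this
    have hsurj : Function.Surjective H' := by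
      rintro ⟨p, hp⟩
      have hcl : IsClosed (Set.range H) := (isCompact_range hHcont).isClosed
      have hsub : hCompSet 𝓔 ℝ ⊆ Set.range H := by
        refine closure_minimal ?_ hcl
        rintro _ ⟨x, rfl⟩
        exact ⟨x.val, hHx x⟩
      obtain ⟨z, hz⟩ := hsub hp
      exact ⟨z, Subtype.ext hz⟩
    let e := Equiv.ofBijective H' ⟨hinj, hsurj⟩
    have he : Continuous e := hH'cont
    refine ⟨he.homeoOfEquivCompactToT2, ?_⟩
    intro x
    show H' x.val = deltaEmb 𝓔 ℝ x
    exact Subtype.ext (hHx x)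
end

section
/- If an infinite compactification K contains a sequence (xₙ)ₙ of pairwise distinct isolated points of K converging to a point of K, then G_{K',K} ≠ FS_{K'}. -/
open Set Filter Topology

universe u u₁ u₂ v w

section Aux17
variable {K : Type u} [TopologicalSpace K]

def auxSwap (n : ℕ) : ℕ := if n % 2 = 0 then n + 1 else n - 1

lemma auxSwap_invol (n : ℕ) : auxSwap (auxSwap n) = n := by
  unfold auxSwap; split <;> split <;> omega

lemma auxSwap_ne (n : ℕ) : auxSwap n ≠ n := by
  unfold auxSwap; split <;> omega

lemma auxSwap_ge {n N : ℕ} (h : N + 1 ≤ n) : N ≤ auxSwap n := by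
  unfold auxSwap; split <;> omega

open Classical in
noncomputable def auxF (x : ℕ → ↥(isolatedPoints K)) (y : K) : K :=
  if h : ∃ n, (x n).val = y then (x (auxSwap h.choose)).val else y

variable {x : ℕ → ↥(isolatedPoints K)} (hx : Function.Injective x)

include hx in
lemma valx_inj : Function.Injective (fun n => (x n).val) :=
  fun _ _ h => hx (Subtype.val_injective h)

include hx in
lemma auxF_apply (n : ℕ) : auxF x (x n).val = (x (auxSwap n)).val := by
  have h : ∃ m, (x m).val = (x n).val := ⟨n, rfl⟩
  have : h.choose = n := valx_inj hx h.choose_spec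
  rw [auxF, dif_pos h, this]

lemma auxF_of_not_mem {y : K} (hy : y ∉ Set.range (fun n => (x n).val)) :
    auxF x y = y := by
  rw [auxF, dif_neg]
  exact fun ⟨n, hn⟩ => hy ⟨n, hn⟩

include hx in
lemma auxF_invol (y : K) : auxF x (auxF x y) = y := by
  by_cases h : ∃ n, (x n).val = y
  · obtain ⟨n, hn⟩ := h
    rw [← hn, auxF_apply hx, auxF_apply hx, auxSwap_invol]
  · rw [auxF_of_not_mem (fun ⟨n, hn⟩ => h ⟨n, hn⟩),
      auxF_of_not_mem (fun ⟨n, hn⟩ => h ⟨n, hn⟩)]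

lemma auxF_mem_isolated {y : K} (hy : y ∈ isolatedPoints K) :
    auxF x y ∈ isolatedPoints K := by
  by_cases h : ∃ n, (x n).val = y
  · rw [auxF, dif_pos h]; exact (x _).2
  · rwa [auxF_of_not_mem (fun ⟨n, hn⟩ => h ⟨n, hn⟩)]

include hx in
lemma auxF_continuous [T2Space K] {z : K}
    (hz : z ∉ isolatedPoints K)
    (hconv : Filter.Tendsto (fun n => (x n).val) Filter.atTop (nhds z)) :
    Continuous (auxF x) := by
  rw [continuous_iff_continuousAt]
  intro y
  by_cases hy : y ∈ isolatedPoints K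
  · have hpure : 𝓝 y = pure y := (isOpen_singleton_iff_nhds_eq_pure _).mp hy
    rw [ContinuousAt, hpure]
    exact tendsto_pure_nhds _ y
  by_cases hyz : y = z
  · subst hyz
    have hfz : auxF x y = y :=
      auxF_of_not_mem (fun ⟨n, hn⟩ => hy (hn ▸ (x n).2))
    rw [ContinuousAt, hfz, tendsto_nhds]
    intro V hV hzV
    obtain ⟨N, hN⟩ := eventually_atTop.mp (hconv.eventually (hV.mem_nhds hzV))
    have hFfin : ((fun n => (x n).val) '' (Set.Iio (N+1))).Finite :=
      (Set.finite_Iio _).image _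
    have hU : IsOpen (V \ (fun n => (x n).val) '' (Set.Iio (N+1))) :=
      hV.sdiff hFfin.isClosed
    have hzU : y ∈ V \ (fun n => (x n).val) '' (Set.Iio (N+1)) := by
      refine ⟨hzV, ?_⟩
      rintro ⟨n, -, hn⟩
      exact hy (hn ▸ (x n).2)
    refine Filter.mem_of_superset (hU.mem_nhds hzU) ?_
    rintro u ⟨huV, huF⟩
    by_cases h : ∃ n, (x n).val = u
    · obtain ⟨n, hn⟩ := h
      have hnN : N + 1 ≤ n := by
        by_contra h'
        exact huF ⟨n, Set.mem_Iio.mpr (by omega), hn⟩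
      rw [Set.mem_preimage, ← hn, auxF_apply hx]
      exact hN _ (auxSwap_ge hnN)
    · rw [Set.mem_preimage, auxF_of_not_mem (fun ⟨n, hn⟩ => h ⟨n, hn⟩)]
      exact huV
  · have hC : IsClosed (insert z (Set.range fun n => (x n).val)) :=
      hconv.isCompact_insert_range.isClosed
    have hyC : y ∉ insert z (Set.range fun n => (x n).val) := by
      rintro (rfl | ⟨n, hn⟩)
      · exact hyz rfl
      · exact hy (hn ▸ (x n).2)
    have heq : auxF x =ᶠ[𝓝 y] id :=
      Filter.eventually_of_mem (hC.isOpen_compl.mem_nhds hyC)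
        (fun u hu => auxF_of_not_mem (fun hr => hu (Set.mem_insert_iff.mpr (Or.inr hr))))
    exact continuousAt_id.congr heq.symm

end Aux17

/-- If an infinite compactification `K` contains a sequence of pairwise
distinct isolated points converging to a point of `K`, then `G_{K',K} ≠ FS_{K'}`. -/

theorem statement17 (K : Type u) [TopologicalSpace K] (hK : IsCompactification K)
    (hinf : Infinite K)
    (x : ℕ → ↥(isolatedPoints K)) (hx : Function.Injective x) (z : K)
    (hconv : Filter.Tendsto (fun n => (x n).val) Filter.atTop (nhds z)) :
    homeoPerms K ≠
      {σ : Equiv.Perm ↥(isolatedPoints K) | {y : ↥(isolatedPoints K) | σ y ≠ y}.Finite} := by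
  classical
  obtain ⟨hcomp, ht2, hdense⟩ := hK
  haveI := ht2
  have hz : z ∉ isolatedPoints K := by
    intro hzI
    have hpure : 𝓝 z = pure z := (isOpen_singleton_iff_nhds_eq_pure _).mp hzI
    rw [hpure, Filter.tendsto_pure, Filter.eventually_atTop] at hconv
    obtain ⟨N, hN⟩ := hconv
    have := hx (Subtype.val_injective ((hN N le_rfl).trans (hN (N+1) (by omega)).symm))
    omega
  have hcont := auxF_continuous hx hz hconv
  let e : K ≃ K := ⟨auxF x, auxF x, auxF_invol hx, auxF_invol hx⟩
  let h : K ≃ₜ K := ⟨e, hcont, hcont⟩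
  let σ : Equiv.Perm ↥(isolatedPoints K) :=
    ⟨fun p => ⟨auxF x p.val, auxF_mem_isolated p.2⟩,
     fun p => ⟨auxF x p.val, auxF_mem_isolated p.2⟩,
     fun p => Subtype.ext (auxF_invol hx p.val),
     fun p => Subtype.ext (auxF_invol hx p.val)⟩
  intro heq
  have hσmem : σ ∈ homeoPerms K :=
    ⟨h, fun w hw => auxF_of_not_mem (fun ⟨n, hn⟩ => hw (hn ▸ (x n).2)),
     fun p => rfl⟩
  rw [heq] at hσmem
  have hinf' : {y : ↥(isolatedPoints K) | σ y ≠ y}.Infinite := by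
    apply Set.infinite_of_injective_forall_mem hx
    intro n hsig
    have hv : auxF x (x n).val = (x n).val := congrArg Subtype.val hsig
    rw [auxF_apply hx] at hv
    exact auxSwap_ne n (valx_inj hx hv)
  exact hinf' hσmem
end
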